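/- Let A be a C*-algebra. There exists a bijective bounded linear map ψ : A → A satisfying ψ(a b) = ψ(b) ψ(a) and ψ(a*) = ψ(a)* for all a, b ∈ A (i.e. A is self-opposite as a C*-algebra) if and only if there exists a bijective bounded linear map φ : A → A satisfying φ(a b* c) = φ(c) φ(b)* φ(a) for all a, b, c ∈ A (i.e. A is self-opposite as a TRO). -/

import Mathlib

open scoped ComplexStarModule

section Aux

variable {A : Type*} [NonUnitalCStarAlgebra A]

/-- Cancellation: if `z * y = z * y'` for all `z`, then `y = y'`. -/
private lemma aux_right_mul_cancel {y y' : A} (h : ∀ z : A, z * y = z * y') : y = y' := by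
  have hd : star (y - y') * (y - y') = 0 := by
    rw [mul_sub, h (star (y - y')), sub_self]
  have : ‖y - y'‖ * ‖y - y'‖ = 0 := by
    rw [← CStarRing.norm_star_mul_self, hd, norm_zero]
  have : ‖y - y'‖ = 0 := by nlinarith [norm_nonneg (y - y')]
  rwa [norm_eq_zero, sub_eq_zero] at this

/-- Every selfadjoint element is a difference of two squares of selfadjoint elements. -/
private lemma aux_selfAdjoint_decomp (h : A) (hh : IsSelfAdjoint h) :
    ∃ b c : A, IsSelfAdjoint b ∧ IsSelfAdjoint c ∧ h = b * b - c * c := by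
  refine ⟨cfcₙ (fun t : ℝ => Real.sqrt (max t 0)) h, cfcₙ (fun t : ℝ => Real.sqrt (max (-t) 0)) h,
    cfcₙ_predicate _ h, cfcₙ_predicate _ h, ?_⟩
  rw [← cfcₙ_mul _ _ h, ← cfcₙ_mul _ _ h, ← cfcₙ_sub _ _ h]
  conv_lhs => rw [← cfcₙ_id ℝ h hh]
  apply cfcₙ_congr
  intro t _
  simp only [id_eq]
  rw [Real.mul_self_sqrt (le_max_right _ _), Real.mul_self_sqrt (le_max_right _ _)]
  rcases le_total t 0 with ht | ht
  · rw [max_eq_right ht, max_eq_left (neg_nonneg.mpr ht)]; ring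
  · rw [max_eq_left ht, max_eq_right (neg_nonpos.mpr ht)]; ring

/-- The set of products `a * star b` spans `A`. -/
private lemma aux_span_top :
    Submodule.span ℂ {x : A | ∃ a b : A, x = a * star b} = ⊤ := by
  rw [eq_top_iff]
  rintro a -
  have hsa : ∀ h : A, IsSelfAdjoint h →
      h ∈ Submodule.span ℂ {x : A | ∃ a b : A, x = a * star b} := by
    intro h hh
    obtain ⟨b, c, hb, hc, rfl⟩ := aux_selfAdjoint_decomp h hh
    refine sub_mem (Submodule.subset_span ⟨b, b, ?_⟩) (Submodule.subset_span ⟨c, c, ?_⟩)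
    · rw [hb.star_eq]
    · rw [hc.star_eq]
  rw [← realPart_add_I_smul_imaginaryPart a]
  exact add_mem (hsa _ (ℜ a).2) (Submodule.smul_mem _ _ (hsa _ (ℑ a).2))

end Aux

/-- A C*-algebra `A` is self-opposite as a C*-algebra (there is a
bijective bounded linear `*`-anti-automorphism) if and only if it is self-opposite
as a TRO (there is a bijective bounded linear TRO anti-automorphism). -/
theorem selfOpposite_cstar_iff_selfOpposite_tro
    {A : Type*} [NonUnitalCStarAlgebra A] :
    (∃ ψ : A →L[ℂ] A, Function.Bijective ψ ∧
        (∀ a b : A, ψ (a * b) = ψ b * ψ a) ∧ (∀ a : A, ψ (star a) = star (ψ a))) ↔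
    (∃ φ : A →L[ℂ] A, Function.Bijective φ ∧
        ∀ a b c : A, φ (a * star b * c) = φ c * star (φ b) * φ a) := by
  constructor
  · rintro ⟨ψ, hbij, hmul, hstar⟩
    refine ⟨ψ, hbij, fun a b c => ?_⟩
    rw [hmul, hmul, hstar, mul_assoc]
  · rintro ⟨φ, hbij, hφ⟩
    -- the continuous inverse of φ, by the open mapping theorem
    let e : A ≃L[ℂ] A :=
      ContinuousLinearEquiv.ofBijective φ (LinearMap.ker_eq_bot.mpr hbij.1)
        (LinearMap.range_eq_top.mpr hbij.2)
    have he : ∀ u : A, φ (e.symm u) = u := fun u => by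
      have : (⇑e : A → A) = φ := by
        ext x
        rfl
      rw [← this]
      exact e.apply_symm_apply u
    -- the submodule of x admitting a "right companion"
    let Q : Submodule ℂ A :=
      { carrier := {x : A | ∃ y : A, ∀ c : A, φ (x * c) = φ c * y}
        add_mem' := by
          rintro x x' ⟨y, hy⟩ ⟨y', hy'⟩
          exact ⟨y + y', fun c => by rw [add_mul, map_add, hy, hy', mul_add]⟩
        zero_mem' := ⟨0, fun c => by rw [zero_mul, map_zero, mul_zero]⟩
        smul_mem' := by
          rintro m x ⟨y, hy⟩
          exact ⟨m • y, fun c => by rw [smul_mul_assoc, map_smul, hy, mul_smul_comm]⟩ }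
    have hQtop : ∀ x : A, ∃ y : A, ∀ c : A, φ (x * c) = φ c * y := by
      have hsub : {x : A | ∃ a b : A, x = a * star b} ⊆ (Q : Set A) := by
        rintro _ ⟨a, b, rfl⟩
        exact ⟨star (φ b) * φ a, fun c => by rw [hφ, mul_assoc]⟩
      have : Submodule.span ℂ {x : A | ∃ a b : A, x = a * star b} ≤ Q :=
        Submodule.span_le.mpr hsub
      rw [aux_span_top] at this
      exact fun x => this (Submodule.mem_top)
    -- uniqueness of the companion
    have huniq : ∀ (x y y' : A), (∀ c : A, φ (x * c) = φ c * y) →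
        (∀ c : A, φ (x * c) = φ c * y') → y = y' := by
      intro x y y' hy hy'
      refine aux_right_mul_cancel fun z => ?_
      obtain ⟨c, rfl⟩ := hbij.2 z
      rw [← hy c, hy' c]
    -- the map itself
    choose ψ0 hψ0 using hQtop
    have hadd : ∀ x x' : A, ψ0 (x + x') = ψ0 x + ψ0 x' := by
      intro x x'
      refine huniq (x + x') _ _ (hψ0 _) fun c => ?_
      rw [add_mul, map_add, hψ0 x, hψ0 x', mul_add]
    have hsmul : ∀ (m : ℂ) (x : A), ψ0 (m • x) = m • ψ0 x := by
      intro m x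
      refine huniq (m • x) _ _ (hψ0 _) fun c => ?_
      rw [smul_mul_assoc, map_smul, hψ0 x, mul_smul_comm]
    let ψₗ : A →ₗ[ℂ] A :=
      { toFun := ψ0
        map_add' := hadd
        map_smul' := hsmul }
    have hbound : ∀ x : A, ‖ψₗ x‖ ≤ (‖φ‖ * ‖(e.symm : A →L[ℂ] A)‖) * ‖x‖ := by
      intro x
      have key : ∀ z : A, z * ψ0 x = φ (x * e.symm z) := fun z => by
        rw [hψ0 x (e.symm z), he z]
      rcases eq_or_ne (ψ0 x) 0 with h0 | h0
      · simp only [ψₗ, LinearMap.coe_mk, AddHom.coe_mk, h0, norm_zero]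
        positivity
      · have h1 : ‖ψ0 x‖ * ‖ψ0 x‖ ≤ (‖φ‖ * ‖(e.symm : A →L[ℂ] A)‖ * ‖x‖) * ‖ψ0 x‖ := by
          calc ‖ψ0 x‖ * ‖ψ0 x‖ = ‖star (ψ0 x) * ψ0 x‖ := CStarRing.norm_star_mul_self.symm
            _ = ‖φ (x * e.symm (star (ψ0 x)))‖ := by rw [key]
            _ ≤ ‖φ‖ * ‖x * e.symm (star (ψ0 x))‖ := φ.le_opNorm _
            _ ≤ ‖φ‖ * (‖x‖ * ‖e.symm (star (ψ0 x))‖) :=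
                mul_le_mul_of_nonneg_left (norm_mul_le _ _) (norm_nonneg _)
            _ ≤ ‖φ‖ * (‖x‖ * (‖(e.symm : A →L[ℂ] A)‖ * ‖star (ψ0 x)‖)) := by
                gcongr
                exact (e.symm : A →L[ℂ] A).le_opNorm _
            _ = (‖φ‖ * ‖(e.symm : A →L[ℂ] A)‖ * ‖x‖) * ‖ψ0 x‖ := by
                rw [norm_star]; ring
        have hpos : 0 < ‖ψ0 x‖ := norm_pos_iff.mpr h0
        have := le_of_mul_le_mul_right h1 hpos
        simpa [ψₗ, mul_assoc] using this
    let ψ : A →L[ℂ] A := ψₗ.mkContinuous _ hbound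
    have hψ : ∀ x c : A, φ (x * c) = φ c * ψ x := hψ0
    -- companion characterization of ψ applied to generators
    have hgen : ∀ a b : A, ψ (a * star b) = star (φ b) * φ a := by
      intro a b
      exact huniq _ _ _ (hψ _) fun c => by rw [hφ, mul_assoc]
    -- injectivity
    have hinj : Function.Injective ψ := by
      rw [injective_iff_map_eq_zero]
      intro x hx
      have : ∀ c : A, x * c = 0 := by
        intro c
        apply hbij.1
        rw [hψ x c, hx, mul_zero, map_zero]
      have h2 : x * star x = 0 := this (star x)
      have : ‖x‖ * ‖x‖ = 0 := by rw [← CStarRing.norm_self_mul_star, h2, norm_zero]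
      have : ‖x‖ = 0 := by nlinarith [norm_nonneg x]
      rwa [norm_eq_zero] at this
    -- surjectivity
    have hsurj : Function.Surjective ψ := by
      have hsub : {x : A | ∃ a b : A, x = a * star b} ⊆ (LinearMap.range (ψ : A →ₗ[ℂ] A) : Set A) := by
        rintro _ ⟨a, b, rfl⟩
        refine ⟨e.symm (star b) * star (e.symm (star a)), ?_⟩
        rw [ContinuousLinearMap.coe_coe, hgen, he, he, star_star]
      have hle : Submodule.span ℂ {x : A | ∃ a b : A, x = a * star b} ≤ LinearMap.range (ψ : A →ₗ[ℂ] A) :=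
        Submodule.span_le.mpr hsub
      rw [aux_span_top] at hle
      intro y
      exact hle (Submodule.mem_top : y ∈ ⊤)
    -- anti-multiplicativity
    have hmul : ∀ a b : A, ψ (a * b) = ψ b * ψ a := by
      intro a b
      refine huniq (a * b) _ _ (hψ _) fun c => ?_
      rw [mul_assoc, hψ a (b * c), hψ b c, mul_assoc]
    -- star preservation
    have hstar : ∀ a : A, ψ (star a) = star (ψ a) := by
      let T : Submodule ℂ A :=
        { carrier := {x : A | ψ (star x) = star (ψ x)}
          add_mem' := by
            intro x x' hx hx'
            simp only [Set.mem_setOf_eq] at *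
            rw [star_add, map_add, hx, hx', map_add, star_add]
          zero_mem' := by simp
          smul_mem' := by
            intro m x hx
            simp only [Set.mem_setOf_eq] at *
            rw [star_smul, map_smul, hx, map_smul, star_smul] }
      have hsub : {x : A | ∃ a b : A, x = a * star b} ⊆ (T : Set A) := by
        rintro _ ⟨a, b, rfl⟩
        show ψ (star (a * star b)) = star (ψ (a * star b))
        rw [star_mul, star_star, hgen, hgen, star_mul, star_star]
      have hle : Submodule.span ℂ {x : A | ∃ a b : A, x = a * star b} ≤ T :=
        Submodule.span_le.mpr hsub
      rw [aux_span_top] at hle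
      exact fun a => hle (Submodule.mem_top : a ∈ ⊤)
    exact ⟨ψ, ⟨hinj, hsurj⟩, hmul, hstar⟩
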